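/- The trace Tr on the algebra of integer-order pseudodifferential symbols over Laurent series, defined as Tr(Σ p_k(z)Dᵏ) = Res_{z=0} p_{-1}(z), vanishes on commutators: Tr(A∘B) = Tr(B∘A) for all symbols A, B of integer order. -/

import Mathlib

noncomputable section

/-- Generalized binomial coefficient `binom(m, l)` for integer `m`. -/
def qbinom (m : ℤ) (l : ℕ) : ℚ :=
  (∏ i ∈ Finset.range l, ((m : ℚ) - (i : ℚ))) / (Nat.factorial l : ℚ)

/-- Finite order condition for a symbol `Σ_{k ≤ N} p_k Dᵏ`. -/
def OrderBdd {R : Type*} [Zero R] (A : ℤ → R) : Prop := ∃ N : ℤ, ∀ k : ℤ, N < k → A k = 0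

/-- Product of pseudodifferential symbols via `Dᵐ ∘ u = Σ binom(m,l) u^{(l)} D^{m-l}`. -/
def pdMul {R : Type*} [CommRing R] [Algebra ℚ R] (d : R → R) (A B : ℤ → R) : ℤ → R :=
  fun m => ∑ᶠ p : ℤ × ℕ, qbinom p.1 p.2 • (A p.1 * d^[p.2] (B (m - p.1 + (p.2 : ℤ))))

/-- Formal derivative `d/dz` on Laurent polynomials `ℂ[z,z⁻¹]`. -/
def lder (f : LaurentPolynomial ℂ) : LaurentPolynomial ℂ :=
  Finsupp.sum (AddMonoidAlgebra.coeff f) fun n a =>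
    (AddMonoidAlgebra.ofCoeff (Finsupp.single (n - 1) ((n : ℂ) * a)) : LaurentPolynomial ℂ)

/-- Residue at `z = 0`: the coefficient of `z⁻¹`. -/
def lres (f : LaurentPolynomial ℂ) : ℂ := (AddMonoidAlgebra.coeff f) (-1)

/-- Trace of a symbol: the residue of its coefficient `p_{-1}` of `D⁻¹`. -/
def pdTr (A : ℤ → LaurentPolynomial ℂ) : ℂ := lres (A (-1))

/-! ### Auxiliary lemmas -/

lemma lres_add' (f g : LaurentPolynomial ℂ) : lres (f + g) = lres f + lres g := rfl

lemma lres_smul' (q : ℚ) (f : LaurentPolynomial ℂ) : lres (q • f) = q • lres f := rfl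

/-- `lres` as an additive monoid homomorphism. -/
def lresHom : LaurentPolynomial ℂ →+ ℂ where
  toFun := lres
  map_zero' := rfl
  map_add' := lres_add'

lemma lresHom_apply (f : LaurentPolynomial ℂ) : lresHom f = lres f := rfl

lemma lder_zero' : lder 0 = 0 := by
  rw [lder]; exact Finsupp.sum_zero_index

lemma lder_iter_zero (l : ℕ) : lder^[l] 0 = 0 := Function.iterate_fixed lder_zero' l

lemma lder_single (n : ℤ) (a : ℂ) :
    lder (AddMonoidAlgebra.single n a) = AddMonoidAlgebra.single (n-1) ((n:ℂ)*a) := by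
  rw [lder]; exact Finsupp.sum_single_index (by rw [mul_zero, Finsupp.single_zero, AddMonoidAlgebra.ofCoeff_zero])

lemma lder_add (f g : LaurentPolynomial ℂ) : lder (f + g) = lder f + lder g := by
  rw [lder, lder, lder, AddMonoidAlgebra.coeff_add]
  exact Finsupp.sum_add_index (fun _ _ => by rw [mul_zero, Finsupp.single_zero, AddMonoidAlgebra.ofCoeff_zero])
    (fun _ _ _ _ => by rw [mul_add, Finsupp.single_add, AddMonoidAlgebra.ofCoeff_add])

lemma lres_single (n : ℤ) (a : ℂ) : lres (AddMonoidAlgebra.single n a) = if n = -1 then a else 0 := by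
  rw [lres]; exact Finsupp.single_apply

/-- Integration by parts: `Res (f ∂g) = - Res ((∂f) g)`. -/
lemma key_parts (f g : LaurentPolynomial ℂ) : lres (f * lder g) = - lres (lder f * g) := by
  induction f using AddMonoidAlgebra.induction_linear with
  | zero => simp [lder_zero', lres]
  | add f₁ f₂ h₁ h₂ => rw [lder_add, add_mul, add_mul, lres_add', lres_add', h₁, h₂, neg_add]
  | single n a =>
    induction g using AddMonoidAlgebra.induction_linear with
    | zero => simp [lder_zero', lres]
    | add g₁ g₂ h₁ h₂ => rw [lder_add, mul_add, mul_add, lres_add', lres_add', h₁, h₂, neg_add]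
    | single m b =>
      rw [lder_single, lder_single, AddMonoidAlgebra.single_mul_single,
        AddMonoidAlgebra.single_mul_single, lres_single, lres_single]
      split_ifs with h1 h2 h2
      · have : (n : ℂ) = -(m : ℂ) := by
          have : n = -m := by omega
          simp [this]
        rw [this]; ring
      · omega
      · omega
      · simp

lemma key_iter (l : ℕ) (f g : LaurentPolynomial ℂ) :
    lres (f * lder^[l] g) = (-1)^l * lres (lder^[l] f * g) := by
  induction l generalizing g with
  | zero => simp
  | succ l ih =>
    rw [Function.iterate_succ_apply, ih, key_parts, Function.iterate_succ_apply']
    ring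

lemma prod_reflect (k : ℚ) (l : ℕ) :
    ∏ i ∈ Finset.range l, ((l:ℚ) - 1 - k - i) = (-1)^l * ∏ i ∈ Finset.range l, (k - i) := by
  have h1 : ∀ i ∈ Finset.range l, ((l:ℚ) - 1 - k - i) = (fun j : ℕ => (j:ℚ) - k) (l - 1 - i) := by
    intro i hi
    simp only [Finset.mem_range] at hi
    have h2 : (l - 1 - i) + (i + 1) = l := by omega
    have h3 : ((l - 1 - i : ℕ) : ℚ) + (i + 1) = l := by
      exact_mod_cast congrArg (Nat.cast : ℕ → ℚ) h2
    simp only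
    linarith
  rw [Finset.prod_congr rfl h1]
  beta_reduce
  rw [Finset.prod_range_reflect (fun j : ℕ => (j:ℚ) - k) l]
  rw [show (fun j : ℕ => (j:ℚ) - k) = fun j : ℕ => (-1) * (k - j) from by funext j; ring]
  rw [Finset.prod_mul_distrib, Finset.prod_const, Finset.card_range]

lemma qbinom_reflect (k : ℤ) (l : ℕ) :
    qbinom k l = (-1)^l * qbinom ((l:ℤ) - 1 - k) l := by
  unfold qbinom
  have : ∀ i ∈ Finset.range l, ((((l:ℤ) - 1 - k : ℤ) : ℚ) - (i:ℚ)) = ((l:ℚ) - 1 - (k:ℚ) - i) := by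
    intro i _; push_cast; ring
  rw [Finset.prod_congr rfl this, prod_reflect, ← mul_div_assoc, ← mul_assoc, ← mul_pow]
  norm_num

lemma support_fin (A B : ℤ → LaurentPolynomial ℂ) (NA NB : ℤ)
    (hA : ∀ k, NA < k → A k = 0) (hB : ∀ k, NB < k → B k = 0) (m : ℤ) :
    (Function.support fun p : ℤ × ℕ =>
      qbinom p.1 p.2 • (A p.1 * lder^[p.2] (B (m - p.1 + (p.2 : ℤ))))).Finite := by
  apply Set.Finite.subset
    ((Finset.Icc (m - NB) NA ×ˢ Finset.range ((NA + NB - m).toNat + 1)).finite_toSet)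
  rintro ⟨k, l⟩ hp
  simp only [Function.mem_support] at hp
  have hAk : A k ≠ 0 := by intro h; apply hp; rw [h, zero_mul, smul_zero]
  have hBk : B (m - k + l) ≠ 0 := by
    intro h; apply hp; rw [h, lder_iter_zero, mul_zero, smul_zero]
  have h1 : k ≤ NA := by by_contra h; exact hAk (hA k (by omega))
  have h2 : m - k + l ≤ NB := by by_contra h; exact hBk (hB _ (by omega))
  simp only [Finset.coe_product, Set.mem_prod, Finset.mem_coe, Finset.mem_Icc, Finset.mem_range]
  refine ⟨⟨by omega, h1⟩, by omega⟩

/-- The reindexing involution `(k, l) ↦ (l - 1 - k, l)`. -/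
def reflEquiv : ℤ × ℕ ≃ ℤ × ℕ where
  toFun p := ((p.2 : ℤ) - 1 - p.1, p.2)
  invFun p := ((p.2 : ℤ) - 1 - p.1, p.2)
  left_inv p := by ext <;> simp
  right_inv p := by ext <;> simp

/-- the trace vanishes on commutators: `Tr(A∘B) = Tr(B∘A)`. -/
theorem pdTr_mul_comm (A B : ℤ → LaurentPolynomial ℂ)
    (hA : OrderBdd A) (hB : OrderBdd B) :
    pdTr (pdMul lder A B) = pdTr (pdMul lder B A) := by
  obtain ⟨NA, hNA⟩ := hA
  obtain ⟨NB, hNB⟩ := hB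
  have hfin1 := support_fin A B NA NB hNA hNB (-1)
  have hfin2 := support_fin B A NB NA hNB hNA (-1)
  simp only [pdTr, pdMul]
  rw [show lres = ⇑lresHom from rfl]
  rw [lresHom.map_finsum hfin1, lresHom.map_finsum hfin2]
  rw [← finsum_comp_equiv reflEquiv]
  apply finsum_congr
  rintro ⟨k, l⟩
  simp only [reflEquiv, Equiv.coe_fn_mk]
  rw [show (-1 : ℤ) - k + (l : ℤ) = (l : ℤ) - 1 - k from by ring,
    show (-1 : ℤ) - ((l : ℤ) - 1 - k) + (l : ℤ) = k from by ring]
  simp only [lresHom_apply, lres_smul']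
  rw [key_iter l (A ((l : ℤ) - 1 - k)) (B k),
    mul_comm (B k) (lder^[l] (A ((l : ℤ) - 1 - k))), qbinom_reflect k l]
  simp only [Rat.smul_def]
  push_cast
  ring

end
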